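/- arXiv:2112.12924 — 5 statements merged into one kernel-verified Lean document; each statement's English description precedes it below -/
import Mathlib

section
/- Let τ : D → (0,∞) be continuous and define d_τ(z,w) = inf over piecewise smooth curves γ from z to w in D of ∫₀¹ |γ'(t)|/τ(γ(t)) dt. Suppose there exist constants C > 1 and M > 0 such that e^{-d_τ(z,w)} ≤ C (min(τ(z),τ(w))/|z-w|)^M for all z ≠ w in D. Then for every R > 0 there is a constant C₁ > 0 (depending only on C, M, R and the constant δ from the Lipschitz property of τ) such that whenever d_τ(z,w) < R, one has d_τ(z,w) ≥ C₁ |z-w| / min(τ(z), τ(w)). -/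
open Complex MeasureTheory

/-- The weighted path (pseudo)distance on the unit disk with metric density `1/τ`,
defined as the infimum of `∫₀¹ |γ'(t)|/τ(γ(t)) dt` over smooth curves in the disk
joining `z` to `w`. -/
noncomputable def pathDist (τ : ℂ → ℝ) (z w : ℂ) : ℝ :=
  sInf {L : ℝ | ∃ γ : ℝ → ℂ, γ 0 = z ∧ γ 1 = w ∧
    (∀ t ∈ Set.Icc (0:ℝ) 1, ‖γ t‖ < 1) ∧
    ContDiffOn ℝ 1 γ (Set.Icc (0:ℝ) 1) ∧
    L = ∫ t in (0:ℝ)..1, ‖deriv γ t‖ / τ (γ t)}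

open Set in
/-- Per-curve lower bound for the weighted length. -/
lemma curve_bound (τ : ℂ → ℝ) (c₂ : ℝ) (hc₂ : 0 < c₂)
    (hpos : ∀ z : ℂ, ‖z‖ < 1 → 0 < τ z)
    (hlip : ∀ z w : ℂ, ‖z‖ < 1 → ‖w‖ < 1 →
      |τ z - τ w| ≤ c₂ * ‖z - w‖)
    (z w : ℂ) (hz : ‖z‖ < 1) (hw : ‖w‖ < 1)
    (γ : ℝ → ℂ) (h0 : γ 0 = z) (h1 : γ 1 = w)
    (hmem : ∀ t ∈ Set.Icc (0:ℝ) 1, ‖γ t‖ < 1)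
    (hγ : ContDiffOn ℝ 1 γ (Set.Icc (0:ℝ) 1)) :
    min (‖z - w‖) (τ z) / ((1 + c₂) * τ z)
      ≤ ∫ t in (0:ℝ)..1, ‖deriv γ t‖ / τ (γ t) := by
  have hτz : 0 < τ z := hpos z hz
  have hposγ : ∀ t ∈ Icc (0:ℝ) 1, 0 < τ (γ t) := fun t ht => hpos _ (hmem t ht)
  -- integrand nonneg
  have hnn : ∀ t ∈ Icc (0:ℝ) 1, 0 ≤ ‖deriv γ t‖ / τ (γ t) := by
    intro t ht
    exact div_nonneg (norm_nonneg _) (hposγ t ht).le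
  by_cases hzw : z = w
  · have : min (‖z - w‖) (τ z) = 0 := by
      simp [hzw, min_eq_left, hτz.le, hzw ▸ hτz.le]
    rw [this, zero_div]
    exact intervalIntegral.integral_nonneg zero_le_one hnn
  -- main case
  set r : ℝ := min (‖z - w‖) (τ z) with hr
  have hx : 0 < ‖z - w‖ := by
    simpa [sub_eq_zero] using (norm_pos_iff.mpr (sub_ne_zero.2 hzw))
  have hrpos : 0 < r := lt_min hx hτz
  have hrτ : r ≤ τ z := min_le_right _ _
  have hrx : r ≤ ‖z - w‖ := min_le_left _ _
  -- derivative within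
  set g : ℝ → ℂ := derivWithin γ (Icc (0:ℝ) 1) with hg
  have hgc : ContinuousOn g (Icc (0:ℝ) 1) :=
    hγ.continuousOn_derivWithin (uniqueDiffOn_Icc zero_lt_one) le_rfl
  have hγc : ContinuousOn γ (Icc (0:ℝ) 1) := hγ.continuousOn
  -- τ ∘ γ continuous
  have hτlip : LipschitzOnWith c₂.toNNReal τ {ζ : ℂ | ‖ζ‖ < 1} := by
    apply LipschitzOnWith.of_dist_le_mul
    intro a ha b hb
    rw [Real.dist_eq, Complex.dist_eq]
    simpa [Real.coe_toNNReal _ hc₂.le, Complex.dist_eq] using hlip a b ha hb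
  have hτγ : ContinuousOn (fun t => τ (γ t)) (Icc (0:ℝ) 1) :=
    hτlip.continuousOn.comp hγc (fun t ht => hmem t ht)
  set F : ℝ → ℝ := fun t => ‖g t‖ / τ (γ t) with hF
  have hFc : ContinuousOn F (Icc (0:ℝ) 1) := by
    apply ContinuousOn.div (continuous_norm.comp_continuousOn hgc) hτγ
    intro t ht; exact (hposγ t ht).ne'
  have hFnn : ∀ t ∈ Icc (0:ℝ) 1, 0 ≤ F t := fun t ht =>
    div_nonneg (norm_nonneg _) (hposγ t ht).le
  -- the integral equals ∫ F
  have hIeq : (∫ t in (0:ℝ)..1, ‖deriv γ t‖ / τ (γ t)) = ∫ t in (0:ℝ)..1, F t := by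
    apply intervalIntegral.integral_congr_ae
    have h1' : ∀ᵐ (t : ℝ), t ≠ (1:ℝ) := by
      rw [ae_iff]; simpa using (Real.volume_singleton (a := (1:ℝ)))
    filter_upwards [h1'] with t ht1 htΙ
    rw [Set.uIoc_of_le (by norm_num : (0:ℝ) ≤ 1)] at htΙ
    have htIoo : t ∈ Ioo (0:ℝ) 1 := ⟨htΙ.1, lt_of_le_of_ne htΙ.2 ht1⟩
    have : derivWithin γ (Icc (0:ℝ) 1) t = deriv γ t :=
      derivWithin_of_mem_nhds (Icc_mem_nhds htIoo.1 htIoo.2)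
    simp [hF, hg, this]
  rw [hIeq]
  -- exit time
  set φ : ℝ → ℝ := fun t => ‖γ t - z‖ with hφ
  have hφc : ContinuousOn φ (Icc (0:ℝ) 1) :=
    continuous_norm.comp_continuousOn (hγc.sub continuousOn_const)
  set S : Set ℝ := Icc (0:ℝ) 1 ∩ φ ⁻¹' (Ici r) with hS
  have hSne : S.Nonempty := by
    refine ⟨1, ⟨by norm_num, ?_⟩⟩
    simp only [mem_preimage, mem_Ici, hφ, h1]
    calc r ≤ ‖z - w‖ := hrx
    _ = ‖w - z‖ := by rw [norm_sub_rev]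
  have hSbdd : BddBelow S := ⟨0, fun t ht => ht.1.1⟩
  have hSclosed : IsClosed S := hφc.preimage_isClosed_of_isClosed isClosed_Icc isClosed_Ici
  set T : ℝ := sInf S with hT
  have hTS : T ∈ S := hSclosed.csInf_mem hSne hSbdd
  have hT01 : T ∈ Icc (0:ℝ) 1 := hTS.1
  have hφT : r ≤ φ T := hTS.2
  have hlt : ∀ t, 0 ≤ t → t < T → φ t < r := by
    intro t ht0 htT
    by_contra h
    push_neg at h
    have : t ∈ S := ⟨⟨ht0, htT.le.trans hT01.2⟩, h⟩
    exact absurd (csInf_le hSbdd this) (not_le.2 htT)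
  have hT0 : 0 < T := by
    rcases lt_or_eq_of_le hT01.1 with h | h
    · exact h
    · exfalso
      have : φ 0 < r := by simpa [hφ, h0] using hrpos
      rw [← h] at hφT; exact absurd hφT (not_le.2 this)
  -- φ T ≤ r by left continuity
  have hφTle : φ T ≤ r := by
    have hIoo : Ioo (0:ℝ) T ∈ nhdsWithin T (Iio T) := Ioo_mem_nhdsLT hT0
    have hIcc : Icc (0:ℝ) 1 ∈ nhdsWithin T (Iio T) := by
      filter_upwards [hIoo] with t ht; exact ⟨ht.1.le, ht.2.le.trans hT01.2⟩
    have htend : Filter.Tendsto φ (nhdsWithin T (Iio T)) (nhds (φ T)) :=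
      ((hφc.continuousWithinAt hT01).mono_left (nhdsWithin_le_of_mem hIcc))
    have hne : (nhdsWithin T (Iio T)).NeBot := by
      exact nhdsLT_neBot T
    refine le_of_tendsto htend ?_
    filter_upwards [hIoo] with t ht
    exact (hlt t ht.1.le ht.2).le
  have hφle : ∀ t ∈ Icc (0:ℝ) T, φ t ≤ r := by
    intro t ht
    rcases lt_or_eq_of_le ht.2 with h | h
    · exact (hlt t ht.1 h).le
    · rw [h]; exact hφTle
  -- τ(γ t) ≤ (1+c₂) τ z on [0,T]
  have hτbd : ∀ t ∈ Icc (0:ℝ) T, τ (γ t) ≤ (1 + c₂) * τ z := by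
    intro t ht
    have ht1 : t ∈ Icc (0:ℝ) 1 := ⟨ht.1, ht.2.trans hT01.2⟩
    have := hlip (γ t) z (hmem t ht1) hz
    have h2 : τ (γ t) ≤ τ z + c₂ * ‖γ t - z‖ := by
      have := abs_le.1 this
      linarith [this.2]
    calc τ (γ t) ≤ τ z + c₂ * φ t := h2
      _ ≤ τ z + c₂ * r := by nlinarith [hφle t ht]
      _ ≤ τ z + c₂ * τ z := by nlinarith
      _ = (1 + c₂) * τ z := by ring
  -- FTC: γ T - γ 0 = ∫₀ᵀ g
  have hginte : IntervalIntegrable g volume 0 T :=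
    (hgc.mono (Icc_subset_Icc le_rfl hT01.2)).intervalIntegrable_of_Icc hT01.1
  have hFTC : (∫ t in (0:ℝ)..T, g t) = γ T - γ 0 := by
    apply intervalIntegral.integral_eq_sub_of_hasDeriv_right_of_le hT01.1
      (hγc.mono (Icc_subset_Icc le_rfl hT01.2)) _ hginte
    intro x hx
    have hx1 : x ∈ Ioo (0:ℝ) 1 := ⟨hx.1, hx.2.trans_le hT01.2⟩
    have hd : HasDerivWithinAt γ (g x) (Icc (0:ℝ) 1) x :=
      ((hγ.differentiableOn one_ne_zero) x ⟨hx1.1.le, hx1.2.le⟩).hasDerivWithinAt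
    have hda : HasDerivAt γ (g x) x := hd.hasDerivAt (Icc_mem_nhds hx1.1 hx1.2)
    exact hda.hasDerivWithinAt
  -- length bound
  have hlen : r ≤ ∫ t in (0:ℝ)..T, ‖g t‖ := by
    have := intervalIntegral.norm_integral_le_integral_norm (f := g) (μ := volume) hT01.1
    rw [hFTC] at this
    calc r ≤ φ T := hφT
      _ = ‖γ T - γ 0‖ := by rw [hφ, h0]
      _ ≤ ∫ t in (0:ℝ)..T, ‖g t‖ := this
      _ = ∫ t in (0:ℝ)..T, ‖g t‖ := by
          rfl
  -- compare integrals
  have hτzpos : 0 < (1 + c₂) * τ z := by positivity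
  have hFintT : IntervalIntegrable F volume 0 T :=
    (hFc.mono (Icc_subset_Icc le_rfl hT01.2)).intervalIntegrable_of_Icc hT01.1
  have hstep : r / ((1 + c₂) * τ z) ≤ ∫ t in (0:ℝ)..T, F t := by
    have hmono : (∫ t in (0:ℝ)..T, ‖g t‖ / ((1 + c₂) * τ z))
        ≤ ∫ t in (0:ℝ)..T, F t := by
      apply intervalIntegral.integral_mono_on hT01.1 _ hFintT
      · intro t ht
        have ht1 : t ∈ Icc (0:ℝ) 1 := ⟨ht.1, ht.2.trans hT01.2⟩
        exact div_le_div_of_nonneg_left (norm_nonneg _) (hposγ t ht1) (hτbd t ht)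
      · exact (((continuous_norm.comp_continuousOn hgc).mono
          (Icc_subset_Icc le_rfl hT01.2)).div_const _).intervalIntegrable_of_Icc hT01.1
    calc r / ((1 + c₂) * τ z)
        ≤ (∫ t in (0:ℝ)..T, ‖g t‖) / ((1 + c₂) * τ z) := by
          gcongr
      _ = ∫ t in (0:ℝ)..T, ‖g t‖ / ((1 + c₂) * τ z) := by
          rw [intervalIntegral.integral_div]
      _ ≤ ∫ t in (0:ℝ)..T, F t := hmono
  have hFint1 : IntervalIntegrable F volume T 1 :=
    (hFc.mono (Icc_subset_Icc hT01.1 le_rfl)).intervalIntegrable_of_Icc hT01.2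
  have hsplit : (∫ t in (0:ℝ)..T, F t) + ∫ t in T..(1:ℝ), F t = ∫ t in (0:ℝ)..1, F t :=
    intervalIntegral.integral_add_adjacent_intervals hFintT hFint1
  have htail : 0 ≤ ∫ t in T..(1:ℝ), F t := by
    apply intervalIntegral.integral_nonneg hT01.2
    intro u hu; exact hFnn u ⟨hT01.1.trans hu.1, hu.2⟩
  linarith [hstep, htail, hsplit]

open Set in
lemma pathDist_nonempty (τ : ℂ → ℝ) (z w : ℂ)
    (hz : ‖z‖ < 1) (hw : ‖w‖ < 1) :
    {L : ℝ | ∃ γ : ℝ → ℂ, γ 0 = z ∧ γ 1 = w ∧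
      (∀ t ∈ Set.Icc (0:ℝ) 1, ‖γ t‖ < 1) ∧
      ContDiffOn ℝ 1 γ (Set.Icc (0:ℝ) 1) ∧
      L = ∫ t in (0:ℝ)..1, ‖deriv γ t‖ / τ (γ t)}.Nonempty := by
  set γ : ℝ → ℂ := fun t => z + t • (w - z) with hγdef
  refine ⟨∫ t in (0:ℝ)..1, ‖deriv γ t‖ / τ (γ t), γ, by simp [hγdef], ?_, ?_, ?_, rfl⟩
  · simp [hγdef]
  · intro t ht
    have h1 : γ t = (1 - t) • z + t • w := by
      simp only [hγdef]; push_cast; ring_nf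
      simp [smul_sub, sub_smul, one_smul]; ring
    rw [h1]
    calc ‖(1 - t) • z + t • w‖
        ≤ ‖(1 - t) • z‖ + ‖t • w‖ := norm_add_le _ _
      _ = (1 - t) * ‖z‖ + t * ‖w‖ := by
          rw [norm_smul, norm_smul]
          simp [Real.norm_eq_abs, _root_.abs_of_nonneg ht.1,
            _root_.abs_of_nonneg (by linarith [ht.2] : (0:ℝ) ≤ 1 - t)]
      _ < 1 := by
          rcases eq_or_lt_of_le ht.2 with h | h
          · subst h; simpa using hw
          · nlinarith [mul_pos (by linarith : (0:ℝ) < 1 - t) (sub_pos.2 hz),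
              mul_nonneg ht.1 (sub_pos.2 hw).le]
  · exact (contDiff_const.add (contDiff_id.smul contDiff_const)).contDiffOn

open Set in
lemma pathDist_lower (τ : ℂ → ℝ) (c₂ : ℝ) (hc₂ : 0 < c₂)
    (hpos : ∀ z : ℂ, ‖z‖ < 1 → 0 < τ z)
    (hlip : ∀ z w : ℂ, ‖z‖ < 1 → ‖w‖ < 1 →
      |τ z - τ w| ≤ c₂ * ‖z - w‖)
    (z w : ℂ) (hz : ‖z‖ < 1) (hw : ‖w‖ < 1) :
    min (‖z - w‖) (τ z) / ((1 + c₂) * τ z) ≤ pathDist τ z w := by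
  apply le_csInf (pathDist_nonempty τ z w hz hw)
  rintro L ⟨γ, h0, h1, hmem, hγ, rfl⟩
  exact curve_bound τ c₂ hc₂ hpos hlip z w hz hw γ h0 h1 hmem hγ

theorem stmt1 (τ : ℂ → ℝ) (c₁ c₂ : ℝ) (hc₁ : 0 < c₁) (hc₂ : 0 < c₂)
    (hpos : ∀ z : ℂ, ‖z‖ < 1 → 0 < τ z)
    (hbound : ∀ z : ℂ, ‖z‖ < 1 → τ z ≤ c₁ * (1 - ‖z‖))
    (hlip : ∀ z w : ℂ, ‖z‖ < 1 → ‖w‖ < 1 →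
      |τ z - τ w| ≤ c₂ * ‖z - w‖)
    (C M : ℝ) (hC : 1 < C) (hM : 0 < M)
    (hest : ∀ z w : ℂ, ‖z‖ < 1 → ‖w‖ < 1 → z ≠ w →
      Real.exp (-(pathDist τ z w)) ≤
        C * (min (τ z) (τ w) / ‖z - w‖) ^ M) :
    ∀ R : ℝ, 0 < R → ∃ C₁ : ℝ, 0 < C₁ ∧
      ∀ z w : ℂ, ‖z‖ < 1 → ‖w‖ < 1 →
        pathDist τ z w < R →
        pathDist τ z w ≥ C₁ * ‖z - w‖ / min (τ z) (τ w) := by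
  intro R hR
  have hC0 : (0:ℝ) < C := lt_trans one_pos hC
  set K : ℝ := (C * Real.exp R) ^ (1/M) with hKdef
  have hK : 0 < K := Real.rpow_pos_of_pos (by positivity) _
  set a : ℝ := 1 + c₂ with hadef
  have ha1 : 1 < a := by simp [hadef]; linarith
  have ha0 : 0 < a := lt_trans one_pos ha1
  set N : ℝ := max K 1 with hNdef
  have hN1 : 1 ≤ N := le_max_right _ _
  have hNK : K ≤ N := le_max_left _ _
  have hN0 : 0 < N := lt_of_lt_of_le one_pos hN1
  refine ⟨1 / (a^2 * N), by positivity, ?_⟩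
  intro z w hz hw hdR
  set d : ℝ := pathDist τ z w with hddef
  set x : ℝ := ‖z - w‖ with hxdef
  set m : ℝ := min (τ z) (τ w) with hmdef
  have hτz : 0 < τ z := hpos z hz
  have hτw : 0 < τ w := hpos w hw
  have hm0 : 0 < m := lt_min hτz hτw
  have hd2 : min x (τ z) / (a * τ z) ≤ d := pathDist_lower τ c₂ hc₂ hpos hlip z w hz hw
  have hd0 : 0 ≤ d := le_trans (by positivity) hd2
  by_cases hzw : z = w
  · have hx0 : x = 0 := by simp [hxdef, hzw]
    rw [ge_iff_le, hx0]
    simpa using hd0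
  have hx0 : 0 < x := by
    simpa [hxdef] using (norm_pos_iff.mpr (sub_ne_zero.2 hzw))
  -- ratio bound from hest
  have hxKm : x ≤ K * m := by
    have h1 : Real.exp (-R) < Real.exp (-d) := Real.exp_lt_exp.2 (by linarith)
    have h2 : Real.exp (-d) ≤ C * (m / x) ^ M := hest z w hz hw hzw
    have hmx : 0 < m / x := by positivity
    have h3 : Real.exp (-R) / C ≤ (m / x) ^ M := by
      rw [div_le_iff₀ hC0]; rw [mul_comm]; exact le_trans h1.le h2
    have h4 : (x / m) ^ M ≤ C * Real.exp R := by
      have hinv : (x / m) ^ M = ((m / x) ^ M)⁻¹ := by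
        rw [← Real.inv_rpow hmx.le, inv_div]
      have h6 : ((m / x) ^ M)⁻¹ ≤ (Real.exp (-R) / C)⁻¹ := by
        apply inv_anti₀ (by positivity) h3
      have h7 : (Real.exp (-R) / C)⁻¹ = C * Real.exp R := by
        rw [inv_div, Real.exp_neg]; field_simp
      rw [hinv]; rw [h7] at h6; exact h6
    have h5 : x / m ≤ K := by
      have := Real.rpow_le_rpow (Real.rpow_pos_of_pos (by positivity : (0:ℝ) < x / m) M).le h4
        (by positivity : (0:ℝ) ≤ 1/M)
      rwa [← Real.rpow_mul (by positivity : (0:ℝ) ≤ x / m), mul_one_div,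
        div_self hM.ne', Real.rpow_one] at this
    calc x = (x / m) * m := by field_simp
      _ ≤ K * m := by nlinarith
  -- from hlip : τ z ≤ m + c₂ * x
  have hlipzw : -(c₂ * x) ≤ τ z - τ w ∧ τ z - τ w ≤ c₂ * x := abs_le.1 (hlip z w hz hw)
  have hτm : τ z ≤ m + c₂ * x := by
    rcases le_total (τ z) (τ w) with h | h
    · have hm' : m = τ z := min_eq_left h
      have := mul_nonneg hc₂.le hx0.le
      linarith
    · have hm' : m = τ w := min_eq_right h
      linarith [hlipzw.1]
  have hd2' : min x (τ z) ≤ d * (a * τ z) := (div_le_iff₀ (by positivity)).1 hd2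
  rw [ge_iff_le, div_le_iff₀ hm0, one_div, inv_mul_le_iff₀ (by positivity)]
  -- goal : x ≤ a^2 * N * (d * m)
  have haK : a = 1 + c₂ := hadef
  have hmτz : m ≤ τ z := min_le_left _ _
  clear_value d x m a N K
  clear hest hlip hbound hpos hd2 hdR hlipzw
  clear hddef hxdef hmdef hKdef hNdef hadef
  by_cases hcase : x ≤ m
  · -- min x (τ z) = x, τ z ≤ a * m
    have hxτz : x ≤ τ z := le_trans hcase hmτz
    have hmin : min x (τ z) = x := min_eq_left hxτz
    rw [hmin] at hd2'
    have hτam : τ z ≤ a * m := by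
      have h1 : a * m = m + c₂ * m := by rw [haK]; ring
      have h2 : c₂ * x ≤ c₂ * m := mul_le_mul_of_nonneg_left hcase hc₂.le
      linarith
    have p1 := mul_le_mul_of_nonneg_left hτam (mul_nonneg hd0 ha0.le)
    have p2 := mul_le_mul_of_nonneg_right hN1
      (mul_nonneg (mul_nonneg (by positivity : (0:ℝ) ≤ a^2) hd0) hm0.le)
    nlinarith [p1, p2]
  · push_neg at hcase
    -- τ z ≤ a * min x (τ z)
    have hmin : τ z ≤ a * min x (τ z) := by
      rcases min_cases x (τ z) with ⟨h, h'⟩ | ⟨h, h'⟩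
      · rw [h]
        have h1 : a * x = x + c₂ * x := by rw [haK]; ring
        have h2 : c₂ * m ≤ c₂ * x := mul_le_mul_of_nonneg_left hcase.le hc₂.le
        linarith
      · rw [h]
        have := mul_le_mul_of_nonneg_right ha1.le hτz.le
        linarith
    have hd1 : (1:ℝ) ≤ a ^ 2 * d := by
      have h1 : (1:ℝ) * τ z ≤ (a ^ 2 * d) * τ z := by
        have h2 := mul_le_mul_of_nonneg_left hd2' ha0.le
        have heq : a * (d * (a * τ z)) = (a ^ 2 * d) * τ z := by ring
        linarith [hmin, h2, heq.le, heq.ge]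
      exact le_of_mul_le_mul_right h1 hτz
    have hxN : x ≤ N * m := le_trans hxKm (mul_le_mul_of_nonneg_right hNK hm0.le)
    have p1 := mul_le_mul_of_nonneg_left hd1 (mul_nonneg hN0.le hm0.le)
    nlinarith [p1, hxN]
end

section
/- Let H be a reproducing kernel Hilbert space on X with kernel K, and let z, w ∈ X with K_z ≠ 0. Define M(z,w) = sup{|f(z)| : f ∈ H, ‖f‖ = 1, f(w) = 0} and S(z,w) = (1 - |K(z,w)|/(‖K_z‖‖K_w‖))^{1/2}. Then S(z,w) ≤ M(z,w)/√(K(z,z)) ≤ √2 · S(z,w). -/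
open scoped InnerProductSpace

theorem stmt5 {X : Type*} {H : Type*} [NormedAddCommGroup H] [InnerProductSpace ℂ H]
    [CompleteSpace H]
    -- `H` is realized as a reproducing kernel Hilbert space of functions on `X`
    -- via the evaluation pairing `f(z) = ⟪K z, f⟫`.
    (ev : H → X → ℂ) (K : X → H)
    (hrepro : ∀ (f : H) (z : X), ev f z = ⟪K z, f⟫_ℂ)
    (z w : X) (hz : K z ≠ 0) (hw : K w ≠ 0) :
    Real.sqrt (1 - ‖(⟪K w, K z⟫_ℂ)‖ / (‖K z‖ * ‖K w‖)) ≤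
      sSup {r : ℝ | ∃ f : H, ‖f‖ = 1 ∧ ev f w = 0 ∧ r = ‖ev f z‖} / ‖K z‖ ∧
    sSup {r : ℝ | ∃ f : H, ‖f‖ = 1 ∧ ev f w = 0 ∧ r = ‖ev f z‖} / ‖K z‖ ≤
      Real.sqrt 2 * Real.sqrt (1 - ‖(⟪K w, K z⟫_ℂ)‖ / (‖K z‖ * ‖K w‖)) := by
  have ha : (0:ℝ) < ‖K z‖ := norm_pos_iff.mpr hz
  have hb : (0:ℝ) < ‖K w‖ := norm_pos_iff.mpr hw
  set a := ‖K z‖ with ha'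
  set b := ‖K w‖ with hb'
  set p := ‖(⟪K w, K z⟫_ℂ)‖ with hp'
  have hp0 : 0 ≤ p := norm_nonneg _
  have hcs : p ≤ b * a := norm_inner_le_norm _ _
  set c : ℂ := ⟪K w, K z⟫_ℂ / ((b:ℂ)^2) with hc'
  set v : H := K z - c • K w with hv'
  have hbC : ((b:ℂ)^2) ≠ 0 := pow_ne_zero 2 (Complex.ofReal_ne_zero.mpr hb.ne')
  have h1 : ⟪K w, v⟫_ℂ = 0 := by
    rw [hv', inner_sub_right, inner_smul_right, inner_self_eq_norm_sq_to_K, hc', ← hb']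
    field_simp
    simp [hb.ne']
  have h2 : ⟪K z, v⟫_ℂ = ⟪v, v⟫_ℂ := by
    conv_rhs => rw [hv', inner_sub_left, inner_smul_left, h1]
    ring
  have hB : ⟪K w, K z⟫_ℂ * ⟪K z, K w⟫_ℂ = ((p:ℂ))^2 := by
    rw [← inner_conj_symm (K w) (K z), mul_comm, Complex.mul_conj, hp', Complex.normSq_eq_norm_sq]
    push_cast
    rw [norm_inner_symm]
  have h4 : ⟪K z, v⟫_ℂ = ((a^2 - p^2 / b^2 : ℝ) : ℂ) := by
    rw [hv', inner_sub_right, inner_smul_right, inner_self_eq_norm_sq_to_K, hc']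
    push_cast
    field_simp
    linear_combination (-((b:ℂ))⁻¹ ^ 2) * hB
  have h3 : ‖v‖^2 = a^2 - p^2 / b^2 := by
    have h5 : ⟪v, v⟫_ℂ = ((a^2 - p^2 / b^2 : ℝ) : ℂ) := h2 ▸ h4
    rw [@norm_sq_eq_re_inner ℂ, h5]
    norm_cast
  set S : Set ℝ := {r : ℝ | ∃ f : H, ‖f‖ = 1 ∧ ev f w = 0 ∧ r = ‖ev f z‖} with hS'
  have hub : ∀ r ∈ S, r ≤ ‖v‖ := by
    rintro r ⟨f, hf1, hfw, rfl⟩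
    rw [hrepro]
    have hwf : ⟪K w, f⟫_ℂ = 0 := by rw [← hrepro]; exact hfw
    have : ⟪K z, f⟫_ℂ = ⟪v, f⟫_ℂ := by
      rw [hv', inner_sub_left, inner_smul_left, hwf]; ring
    rw [this]
    calc ‖⟪v, f⟫_ℂ‖ ≤ ‖v‖ * ‖f‖ := norm_inner_le_norm _ _
      _ = ‖v‖ := by rw [hf1, mul_one]
  have hMub : sSup S ≤ ‖v‖ := Real.sSup_le hub (norm_nonneg _)
  have hMlb : ‖v‖ ≤ sSup S := by
    rcases eq_or_ne v 0 with hv0' | hv0'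
    · rw [hv0', norm_zero]
      apply Real.sSup_nonneg
      rintro r ⟨f, _, _, rfl⟩; exact norm_nonneg _
    · have hvn : (0:ℝ) < ‖v‖ := norm_pos_iff.mpr hv0'
      apply le_csSup ⟨‖v‖, hub⟩
      refine ⟨((‖v‖:ℂ))⁻¹ • v, ?_, ?_, ?_⟩
      · rw [norm_smul]; simp [hvn.ne']
      · rw [hrepro, inner_smul_right, h1]; simp
      · rw [hrepro, inner_smul_right, h2, inner_self_eq_norm_sq_to_K, norm_mul]
        simp [pow_two]
        field_simp
  have hM : sSup S = ‖v‖ := le_antisymm hMub hMlb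
  set t := p / (a * b) with ht'
  have ht0 : 0 ≤ t := by positivity
  have ht1 : t ≤ 1 := by
    rw [ht', div_le_one (by positivity)]
    linarith [hcs, mul_comm b a]
  have hSnn : 0 ≤ sSup S := hM ▸ norm_nonneg v
  have hva : sSup S / a = Real.sqrt (1 - t^2) := by
    have hsq : (sSup S / a)^2 = 1 - t^2 := by
      rw [hM, div_pow, h3, ht']
      field_simp
    rw [← Real.sqrt_sq (div_nonneg hSnn ha.le), hsq]
  rw [hva]
  constructor
  · apply Real.sqrt_le_sqrt
    nlinarith
  · rw [← Real.sqrt_mul (by norm_num)]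
    apply Real.sqrt_le_sqrt
    nlinarith
end

section
/- Let τ : D → (0,∞) satisfy the standing assumptions (Lipschitz with small constant, τ(z) ≲ 1-|z|) and suppose the distance comparison d_τ(z,w) ≥ C₁|z-w|/min(τ(z),τ(w)) holds whenever d_τ(z,w) < R. For z, w ∈ D and s ∈ [0,1] let z_s = (1-s)z + s w. Then there is a constant C > 0 independent of s, t, z, w such that ρ_τ(z_s, z_t) ≤ C ρ_τ(z,w) for all s, t ∈ [0,1], where ρ_τ = 1 - e^{-d_τ}. -/
open Complex MeasureTheory

private lemma conv_mem (z w : ℂ) (hz : ‖z‖ < 1) (hw : ‖w‖ < 1)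
    {s : ℝ} (hs : s ∈ Set.Icc (0:ℝ) 1) : ‖(1-s) • z + s • w‖ < 1 := by
  obtain ⟨hs0, hs1⟩ := hs
  have h1 : ‖(1-s) • z + s • w‖ ≤ (1-s) * ‖z‖ + s * ‖w‖ := by
    calc ‖(1-s) • z + s • w‖
        ≤ ‖(1-s) • z‖ + ‖s • w‖ := norm_add_le _ _
      _ = |1-s| * ‖z‖ + |s| * ‖w‖ := by
          rw [norm_smul, norm_smul,
            Real.norm_eq_abs, Real.norm_eq_abs]
      _ = (1-s) * ‖z‖ + s * ‖w‖ := by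
          rw [_root_.abs_of_nonneg (by linarith : (0:ℝ) ≤ 1 - s), _root_.abs_of_nonneg hs0]
  have hM : max (‖z‖) (‖w‖) < 1 := max_lt hz hw
  have e1 : (1-s) * ‖z‖ ≤ (1-s) * max (‖z‖) (‖w‖) :=
    mul_le_mul_of_nonneg_left (le_max_left _ _) (by linarith)
  have e2 : s * ‖w‖ ≤ s * max (‖z‖) (‖w‖) :=
    mul_le_mul_of_nonneg_left (le_max_right _ _) hs0
  nlinarith

private lemma pathDist_nonneg (τ : ℂ → ℝ)
    (hpos : ∀ z : ℂ, ‖z‖ < 1 → 0 < τ z) (z w : ℂ) :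
    0 ≤ pathDist τ z w := by
  apply Real.sInf_nonneg
  rintro L ⟨γ, -, -, hmem, -, rfl⟩
  apply intervalIntegral.integral_nonneg zero_le_one
  intro t ht
  exact div_nonneg (norm_nonneg _) (hpos _ (hmem t ht)).le

private lemma pathDist_le_seg (τ : ℂ → ℝ)
    (hpos : ∀ z : ℂ, ‖z‖ < 1 → 0 < τ z) (a b : ℂ)
    (ha : ‖a‖ < 1) (hb : ‖b‖ < 1) :
    pathDist τ a b ≤ ∫ t in (0:ℝ)..1, ‖b - a‖ / τ (a + t • (b - a)) := by
  have hbdd : BddBelow {L : ℝ | ∃ γ : ℝ → ℂ, γ 0 = a ∧ γ 1 = b ∧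
      (∀ t ∈ Set.Icc (0:ℝ) 1, ‖γ t‖ < 1) ∧
      ContDiffOn ℝ 1 γ (Set.Icc (0:ℝ) 1) ∧
      L = ∫ t in (0:ℝ)..1, ‖deriv γ t‖ / τ (γ t)} := by
    refine ⟨0, ?_⟩
    rintro L ⟨γ, -, -, hmem, -, rfl⟩
    apply intervalIntegral.integral_nonneg zero_le_one
    intro t ht
    exact div_nonneg (norm_nonneg _) (hpos _ (hmem t ht)).le
  apply csInf_le hbdd
  refine ⟨fun t : ℝ => a + t • (b - a), by simp, by simp, ?_, ?_, ?_⟩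
  · intro t ht
    show ‖a + t • (b - a)‖ < 1
    have hrw : a + t • (b - a) = (1-t) • a + t • b := by
      rw [smul_sub, sub_smul, one_smul]; ring
    rw [hrw]; exact conv_mem a b ha hb ht
  · exact (contDiff_const.add (contDiff_id.smul contDiff_const)).contDiffOn
  · have hderiv : ∀ t : ℝ, deriv (fun t : ℝ => a + t • (b - a)) t = b - a := by
      intro t
      have : HasDerivAt (fun t : ℝ => a + t • (b - a)) (b - a) t := by
        simpa using ((hasDerivAt_id t).smul_const (b - a)).const_add a
      exact this.deriv
    simp only [hderiv]

set_option maxHeartbeats 1000000 in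
theorem stmt7 (τ : ℂ → ℝ) (c₁ c₂ : ℝ) (hc₁ : 0 < c₁) (hc₂ : 0 < c₂)
    (hpos : ∀ z : ℂ, ‖z‖ < 1 → 0 < τ z)
    (hbound : ∀ z : ℂ, ‖z‖ < 1 → τ z ≤ c₁ * (1 - ‖z‖))
    (hlip : ∀ z w : ℂ, ‖z‖ < 1 → ‖w‖ < 1 →
      |τ z - τ w| ≤ c₂ * ‖z - w‖)
    (R C₁ : ℝ) (hR : 0 < R) (hC₁ : 0 < C₁)
    -- the distance comparison `d_τ(z,w) ≥ C₁|z-w|/min(τ(z),τ(w))` for `d_τ(z,w) < R`: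
    (hcomp : ∀ z w : ℂ, ‖z‖ < 1 → ‖w‖ < 1 →
      pathDist τ z w < R →
      pathDist τ z w ≥ C₁ * ‖z - w‖ / min (τ z) (τ w)) :
    ∃ C : ℝ, 0 < C ∧ ∀ z w : ℂ, ‖z‖ < 1 → ‖w‖ < 1 →
      ∀ s t : ℝ, s ∈ Set.Icc (0:ℝ) 1 → t ∈ Set.Icc (0:ℝ) 1 →
        1 - Real.exp (-(pathDist τ ((1-s) • z + s • w) ((1-t) • z + t • w))) ≤
          C * (1 - Real.exp (-(pathDist τ z w))) := by
  set R' : ℝ := min R (C₁ / (2 * c₂)) with hR'def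
  have hR' : 0 < R' := lt_min hR (by positivity)
  have hER' : 0 < 1 - Real.exp (-R') := by
    have : Real.exp (-R') < 1 := Real.exp_lt_one_iff.mpr (by linarith)
    linarith
  refine ⟨max ((2 / C₁) * Real.exp R') (1 - Real.exp (-R'))⁻¹, ?_, ?_⟩
  · exact lt_max_of_lt_left (by positivity)
  intro z w hz hw s t hs ht
  set zs := (1-s) • z + s • w with hzsdef
  set zt := (1-t) • z + t • w with hztdef
  have hzs : ‖zs‖ < 1 := conv_mem z w hz hw hs
  have hzt : ‖zt‖ < 1 := conv_mem z w hz hw ht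
  have hd0 : 0 ≤ pathDist τ z w := pathDist_nonneg τ hpos z w
  have hρ0 : 0 ≤ 1 - Real.exp (-(pathDist τ z w)) := by
    have : Real.exp (-(pathDist τ z w)) ≤ 1 := Real.exp_le_one_iff.mpr (by linarith)
    linarith
  by_cases hcase : pathDist τ z w < R'
  · -- small distance case
    have hdR : pathDist τ z w < R := lt_of_lt_of_le hcase (min_le_left _ _)
    have hcmp := hcomp z w hz hw hdR
    have hmin : 0 < min (τ z) (τ w) := lt_min (hpos z hz) (hpos w hw)
    set A : ℝ := ‖z - w‖ with hAdef
    set M : ℝ := min (τ z) (τ w) with hMdef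
    -- get |z - w| bound
    have h3 : A < M / (2 * c₂) := by
      have h1 : C₁ * A / M < C₁ / (2 * c₂) :=
        lt_of_le_of_lt hcmp (lt_of_lt_of_le hcase (min_le_right _ _))
      have h2 : C₁ * A < C₁ / (2 * c₂) * M := (div_lt_iff₀ hmin).mp h1
      rw [div_mul_eq_mul_div, mul_div_assoc] at h2
      exact lt_of_mul_lt_mul_left h2 hC₁.le
    have hzw : c₂ * A ≤ M / 2 := by
      have he : c₂ * (M / (2 * c₂)) = M / 2 := by field_simp
      nlinarith
    set m : ℝ := M / 2 with hmdef
    have hm : 0 < m := by positivity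
    -- the segment points lie in the disk and τ ≥ m there
    have hboth : ∀ r : ℝ, r ∈ Set.Icc (0:ℝ) 1 →
        ‖zs + r • (zt - zs)‖ < 1 ∧ m ≤ τ (zs + r • (zt - zs)) := by
      intro r hr
      set u : ℝ := (1-r) * s + r * t with hudef
      have hu : u ∈ Set.Icc (0:ℝ) 1 := by
        constructor
        · have := hr.1; have := hr.2; have := hs.1; have := ht.1; nlinarith
        · have := hr.1; have := hr.2; have := hs.2; have := ht.2; nlinarith
      have hp : zs + r • (zt - zs) = (1-u) • z + u • w := by
        rw [hzsdef, hztdef, hudef]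
        push_cast [Complex.real_smul]
        ring
      have hpd : ‖zs + r • (zt - zs)‖ < 1 := by
        rw [hp]; exact conv_mem z w hz hw hu
      refine ⟨hpd, ?_⟩
      have hpz : ‖zs + r • (zt - zs) - z‖ ≤ A := by
        have h1 : zs + r • (zt - zs) - z = u • (w - z) := by
          rw [hp, sub_smul, one_smul, smul_sub]; ring
        rw [h1, norm_smul, Real.norm_eq_abs,
          _root_.abs_of_nonneg hu.1, norm_sub_rev]
        nlinarith [hu.2, norm_nonneg (z - w)]
      have hlz := hlip z (zs + r • (zt - zs)) hz hpd
      have habs : |τ z - τ (zs + r • (zt - zs))| ≤ c₂ * A := by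
        refine hlz.trans ?_
        rw [show z - (zs + r • (zt - zs)) = -((zs + r • (zt - zs)) - z) by ring,
          norm_neg]
        exact mul_le_mul_of_nonneg_left hpz hc₂.le
      have hτz : M ≤ τ z := min_le_left _ _
      have h2 := abs_le.mp habs
      rw [hmdef]; linarith [h2.1, h2.2]
    have hdisk : ∀ r ∈ Set.Icc (0:ℝ) 1, ‖zs + r • (zt - zs)‖ < 1 :=
      fun r hr => (hboth r hr).1
    have hseg : ∀ r ∈ Set.Icc (0:ℝ) 1, m ≤ τ (zs + r • (zt - zs)) :=
      fun r hr => (hboth r hr).2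
    -- continuity of τ on the disk
    have hcont : ContinuousOn τ {p : ℂ | ‖p‖ < 1} := by
      have : LipschitzOnWith c₂.toNNReal τ {p : ℂ | ‖p‖ < 1} := by
        rw [lipschitzOnWith_iff_dist_le_mul]
        intro x hx y hy
        rw [Real.dist_eq, Complex.dist_eq, Real.coe_toNNReal _ hc₂.le]
        exact hlip x y hx hy
      exact this.continuousOn
    have hγcont : Continuous (fun r : ℝ => zs + r • (zt - zs)) :=
      continuous_const.add (continuous_id.smul continuous_const)
    -- the integrand is continuous on [0,1]
    have hfc : ContinuousOn (fun r : ℝ => ‖zt - zs‖ / τ (zs + r • (zt - zs)))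
        (Set.Icc (0:ℝ) 1) := by
      apply ContinuousOn.div continuousOn_const
      · exact hcont.comp hγcont.continuousOn (fun r hr => hdisk r hr)
      · intro r hr
        exact ne_of_gt (lt_of_lt_of_le hm (hseg r hr))
    have hint : (∫ r in (0:ℝ)..1, ‖zt - zs‖ / τ (zs + r • (zt - zs))) ≤
        ‖zt - zs‖ / m := by
      have h1 : IntervalIntegrable
          (fun r : ℝ => ‖zt - zs‖ / τ (zs + r • (zt - zs))) volume 0 1 := by
        apply ContinuousOn.intervalIntegrable
        rwa [Set.uIcc_of_le zero_le_one]
      have h2 : (∫ r in (0:ℝ)..1, ‖zt - zs‖ / τ (zs + r • (zt - zs))) ≤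
          ∫ _ in (0:ℝ)..1, ‖zt - zs‖ / m := by
        apply intervalIntegral.integral_mono_on zero_le_one h1 intervalIntegrable_const
        intro r hr
        gcongr
        exact hseg r hr
      simpa using h2
    have hd1 : pathDist τ zs zt ≤ ‖zt - zs‖ / m :=
      (pathDist_le_seg τ hpos zs zt hzs hzt).trans hint
    -- |zt - zs| ≤ A
    have hztzs : ‖zt - zs‖ ≤ A := by
      have h1 : zt - zs = (t - s) • (w - z) := by
        rw [hztdef, hzsdef]
        push_cast [Complex.real_smul]
        ring
      rw [h1, norm_smul, Real.norm_eq_abs, norm_sub_rev]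
      have h2 : |t - s| ≤ 1 := abs_le.mpr ⟨by linarith [hs.2, ht.1], by linarith [hs.1, ht.2]⟩
      nlinarith [norm_nonneg (z - w)]
    have hd2 : pathDist τ zs zt ≤ A / m := by
      refine hd1.trans ?_
      gcongr
    -- A / m = 2 A / M ≤ (2/C₁) d
    have hd3 : pathDist τ zs zt ≤ (2 / C₁) * pathDist τ z w := by
      have h1 : C₁ * A / M ≤ pathDist τ z w := hcmp
      have h2 : A / m = 2 * (A / M) := by rw [hmdef]; field_simp
      have h3 : A / M ≤ pathDist τ z w / C₁ := by
        rw [le_div_iff₀ hC₁]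
        calc A / M * C₁ = C₁ * A / M := by ring
          _ ≤ pathDist τ z w := h1
      calc pathDist τ zs zt ≤ A / m := hd2
        _ = 2 * (A / M) := h2
        _ ≤ 2 * (pathDist τ z w / C₁) := by linarith
        _ = (2 / C₁) * pathDist τ z w := by ring
    -- 1 - exp(-x) ≤ x
    have hA1 : 1 - Real.exp (-(pathDist τ zs zt)) ≤ pathDist τ zs zt := by
      linarith [Real.add_one_le_exp (-(pathDist τ zs zt))]
    -- d ≤ exp(R') * (1 - exp(-d))
    have h5 : pathDist τ z w * Real.exp (-R') ≤ 1 - Real.exp (-(pathDist τ z w)) := by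
      set d := pathDist τ z w
      have h7 : (d + 1) * Real.exp (-d) ≤ Real.exp d * Real.exp (-d) :=
        mul_le_mul_of_nonneg_right (Real.add_one_le_exp d) (Real.exp_pos _).le
      have h8 : Real.exp d * Real.exp (-d) = 1 := by rw [← Real.exp_add]; simp
      have e2 : d * Real.exp (-R') ≤ d * Real.exp (-d) :=
        mul_le_mul_of_nonneg_left (Real.exp_le_exp.mpr (by linarith)) hd0
      nlinarith
    have h9 : pathDist τ z w ≤ Real.exp R' * (1 - Real.exp (-(pathDist τ z w))) := by
      have h10 : Real.exp (-R') * Real.exp R' = 1 := by rw [← Real.exp_add]; simp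
      nlinarith [mul_le_mul_of_nonneg_right h5 (Real.exp_pos R').le]
    calc 1 - Real.exp (-(pathDist τ zs zt)) ≤ pathDist τ zs zt := hA1
      _ ≤ (2 / C₁) * pathDist τ z w := hd3
      _ ≤ (2 / C₁) * (Real.exp R' * (1 - Real.exp (-(pathDist τ z w)))) := by
          apply mul_le_mul_of_nonneg_left h9 (by positivity)
      _ = ((2 / C₁) * Real.exp R') * (1 - Real.exp (-(pathDist τ z w))) := by ring
      _ ≤ max ((2 / C₁) * Real.exp R') (1 - Real.exp (-R'))⁻¹ *
            (1 - Real.exp (-(pathDist τ z w))) :=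
          mul_le_mul_of_nonneg_right (le_max_left _ _) hρ0
  · -- large distance case
    push_neg at hcase
    have h1 : 1 - Real.exp (-(pathDist τ zs zt)) ≤ 1 := by
      have := Real.exp_pos (-(pathDist τ zs zt)); linarith
    have h2 : 1 - Real.exp (-R') ≤ 1 - Real.exp (-(pathDist τ z w)) := by
      have : Real.exp (-(pathDist τ z w)) ≤ Real.exp (-R') :=
        Real.exp_le_exp.mpr (by linarith)
      linarith
    calc 1 - Real.exp (-(pathDist τ zs zt)) ≤ 1 := h1
      _ = (1 - Real.exp (-R'))⁻¹ * (1 - Real.exp (-R')) := by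
          rw [inv_mul_cancel₀ (ne_of_gt hER')]
      _ ≤ max ((2 / C₁) * Real.exp R') (1 - Real.exp (-R'))⁻¹ *
            (1 - Real.exp (-(pathDist τ z w))) := by
          apply mul_le_mul (le_max_right _ _) h2 hER'.le
          exact le_trans (by positivity) (le_max_right _ _)
end

section
/- Let φ(z) = (1+z²)/2 and ψ(z) = φ(z) + ε(1-z²)⁵ with 0 < ε < 2⁻⁷. Then ψ(z) = φ(z) + 32ε(1-φ(z))⁵, and |ψ(z)| ≤ |φ(z)| + 32ε(1-|φ(z)|²)² ≤ 1 for all z in the closed unit disk; in particular ψ maps the open unit disk into itself. -/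
open Complex

theorem stmt10 (ε : ℝ) (hε0 : 0 < ε) (hε : ε < 2⁻¹ ^ 7)
    (φ ψ : ℂ → ℂ)
    (hφ : ∀ z : ℂ, φ z = (1 + z ^ 2) / 2)
    (hψ : ∀ z : ℂ, ψ z = φ z + (ε : ℂ) * (1 - z ^ 2) ^ 5) :
    (∀ z : ℂ, ψ z = φ z + 32 * (ε : ℂ) * (1 - φ z) ^ 5) ∧
    (∀ z : ℂ, ‖z‖ ≤ 1 →
      ‖ψ z‖ ≤ ‖φ z‖ + 32 * ε * (1 - ‖φ z‖ ^ 2) ^ 2 ∧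
      ‖φ z‖ + 32 * ε * (1 - ‖φ z‖ ^ 2) ^ 2 ≤ 1) ∧
    (∀ z : ℂ, ‖z‖ < 1 → ‖ψ z‖ < 1) := by
  have hεs : 32 * ε < 1 / 4 := by norm_num at hε ⊢; linarith
  have h1 : ∀ z : ℂ, ψ z = φ z + 32 * (ε : ℂ) * (1 - φ z) ^ 5 := by
    intro z; rw [hψ z, hφ z]; ring
  -- key square inequality: |1-φ|² + |φ|² ≤ 1 when |z| ≤ 1
  have hsq : ∀ z : ℂ, ‖z‖ ≤ 1 →
      ‖1 - φ z‖ ^ 2 + ‖φ z‖ ^ 2 ≤ 1 := by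
    intro z hz
    have hw : ‖z ^ 2‖ ≤ 1 := by
      rw [norm_pow]; exact pow_le_one₀ (norm_nonneg z) hz
    have hw2 : ‖z ^ 2‖ ^ 2 ≤ 1 :=
      pow_le_one₀ (norm_nonneg _) hw
    rw [hφ]
    have e1 : (1 : ℂ) - (1 + z ^ 2) / 2 = (1 - z ^ 2) / 2 := by ring
    rw [e1, norm_div, norm_div]
    have h2 : ‖1 - z ^ 2‖ ^ 2 + ‖1 + z ^ 2‖ ^ 2
        = 2 + 2 * ‖z ^ 2‖ ^ 2 := by
      simp only [Complex.sq_norm, Complex.normSq_apply, Complex.sub_re, Complex.sub_im,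
        Complex.add_re, Complex.add_im, Complex.one_re, Complex.one_im]
      ring
    have habs2 : ‖(2 : ℂ)‖ = 2 := by norm_num
    simp only [habs2, div_pow]
    nlinarith [h2]
  -- the key bound
  have key : ∀ z : ℂ, ‖z‖ ≤ 1 →
      ‖ψ z‖ ≤ ‖φ z‖ + 32 * ε * (1 - ‖φ z‖ ^ 2) ^ 2 := by
    intro z hz
    have hs := hsq z hz
    set a := ‖1 - φ z‖ with ha
    set b := ‖φ z‖ with hb
    have ha0 : 0 ≤ a := norm_nonneg _
    have hb0 : 0 ≤ b := norm_nonneg _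
    have ha1 : a ≤ 1 := by nlinarith
    have h5 : a ^ 5 ≤ (1 - b ^ 2) ^ 2 := by nlinarith [pow_nonneg ha0 4, pow_nonneg ha0 3]
    calc ‖ψ z‖ ≤ ‖φ z‖ + ‖32 * (ε : ℂ) * (1 - φ z) ^ 5‖ := by
          rw [h1 z]; exact norm_add_le _ _
      _ = b + 32 * ε * a ^ 5 := by
          rw [norm_mul, norm_mul, norm_pow]
          simp [Complex.norm_real, abs_of_pos hε0]
          rfl
      _ ≤ b + 32 * ε * (1 - b ^ 2) ^ 2 := by nlinarith
  refine ⟨h1, ?_, ?_⟩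
  · intro z hz
    refine ⟨key z hz, ?_⟩
    have hs := hsq z hz
    set b := ‖φ z‖ with hb
    have hb0 : 0 ≤ b := norm_nonneg _
    have hb1 : b ≤ 1 := by nlinarith [norm_nonneg (1 - φ z)]
    nlinarith [sq_nonneg (1 - b), sq_nonneg (1 + b), sq_nonneg ((1-b)*(1+b))]
  · intro z hz
    have hk := key z hz.le
    have hw : ‖z ^ 2‖ < 1 := by
      rw [norm_pow]; exact pow_lt_one₀ (norm_nonneg z) hz (by norm_num)
    have hblt : ‖φ z‖ < 1 := by
      rw [hφ, norm_div]
      have : ‖1 + z ^ 2‖ ≤ 1 + ‖z ^ 2‖ := by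
        calc ‖1 + z ^ 2‖ ≤ ‖1‖ + ‖z ^ 2‖ :=
              norm_add_le _ _
          _ = 1 + ‖z ^ 2‖ := by norm_num
      have h2 : ‖(2 : ℂ)‖ = 2 := by norm_num
      rw [h2]; linarith
    set b := ‖φ z‖ with hb
    have hb0 : 0 ≤ b := norm_nonneg _
    have hb2 : b ^ 2 < 1 := by nlinarith
    have hpos : 0 < (1 - b ^ 2) ^ 2 := pow_pos (by linarith) 2
    have h4 : 32 * ε * (1 - b ^ 2) ^ 2 < (1 / 4) * (1 - b ^ 2) ^ 2 := by nlinarith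
    have h5 : (1 / 4) * (1 - b ^ 2) ^ 2 ≤ 1 - b := by
      nlinarith [sq_nonneg (1 - b), sq_nonneg (1 + b), mul_nonneg hb0 (sq_nonneg (1 - b)),
        mul_nonneg (mul_nonneg hb0 hb0) (sq_nonneg (1 - b))]
    linarith
end

section
/- Let φ(z) = (1+z²)/2 and ψ(z) = φ(z) + ε(1-z²)⁵ with 0 < ε < 2⁻⁷. Then for all z ∈ D, (|ψ(z)| - |z|)/((1-|z|)(1-|ψ(z)|)) ≤ 11(1-|z|)/(1-|ψ(z)|). -/
open Complex

set_option maxHeartbeats 2000000 in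
theorem stmt14 (ε : ℝ) (hε0 : 0 < ε) (hε : ε < 2⁻¹ ^ 7)
    (φ ψ : ℂ → ℂ)
    (hφ : ∀ z : ℂ, φ z = (1 + z ^ 2) / 2)
    (hψ : ∀ z : ℂ, ψ z = φ z + (ε : ℂ) * (1 - z ^ 2) ^ 5) :
    ∀ z : ℂ, ‖z‖ < 1 →
      (‖ψ z‖ - ‖z‖) /
          ((1 - ‖z‖) * (1 - ‖ψ z‖)) ≤
        11 * (1 - ‖z‖) / (1 - ‖ψ z‖) := by
  intro z hz
  set r := ‖z‖ with hr
  set f := ‖φ z‖ with hfdef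
  set p := ‖ψ z‖ with hpdef
  have hr0 : 0 ≤ r := hr ▸ norm_nonneg z
  have hr2 : r ^ 2 < 1 := by nlinarith
  -- re and abs of z^2
  set a := ‖1 - z ^ 2‖ with hadef
  clear_value r f p a
  have ha0 : 0 ≤ a := hadef ▸ norm_nonneg _
  have hzsq : ‖z ^ 2‖ = r ^ 2 := by rw [norm_pow, ← hr]
  have hre : (z ^ 2).re ≤ r ^ 2 := by
    rw [← hzsq]; exact Complex.re_le_norm _
  have hre2 : -(r ^ 2) ≤ (z ^ 2).re := by
    have h1 := Complex.abs_re_le_norm (z ^ 2)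
    rw [hzsq] at h1
    have := abs_le.1 h1
    linarith [this.1]
  have hasq : a ^ 2 = 1 - 2 * (z ^ 2).re + r ^ 4 := by
    rw [hadef, Complex.sq_norm, Complex.normSq_apply]
    have h1 : Complex.normSq (z ^ 2) = r ^ 4 := by
      rw [← Complex.sq_norm, hzsq]; ring
    rw [Complex.normSq_apply] at h1
    simp [Complex.sub_re, Complex.sub_im, Complex.one_re, Complex.one_im]
    nlinarith [h1]
  -- f in terms of abs (1+z^2)
  have hfeq : f = ‖1 + z ^ 2‖ / 2 := by
    rw [hfdef, hφ, norm_div]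
    norm_num
  have hfsq : f ^ 2 = (1 + 2 * (z ^ 2).re + r ^ 4) / 4 := by
    rw [hfeq, div_pow, Complex.sq_norm, Complex.normSq_apply]
    have h1 : Complex.normSq (z ^ 2) = r ^ 4 := by
      rw [← Complex.sq_norm, hzsq]; ring
    rw [Complex.normSq_apply] at h1
    simp [Complex.add_re, Complex.add_im, Complex.one_re, Complex.one_im]
    nlinarith [h1]
  have hf0 : 0 ≤ f := hfdef ▸ norm_nonneg _
  have hfub : f ≤ (1 + r ^ 2) / 2 := by
    rw [hfeq]
    have := norm_add_le 1 (z ^ 2)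
    simp [hzsq] at this
    linarith
  have hflb : (1 - r ^ 2) / 2 ≤ f := by
    rw [hfeq]
    have h := norm_add_le (-(z ^ 2)) (1 + z ^ 2)
    have h2 : -(z ^ 2) + (1 + z ^ 2) = 1 := by ring
    rw [h2, norm_one, norm_neg, hzsq] at h
    linarith
  have hf1 : f ≤ 1 := by nlinarith
  -- 1 - f^2 ≥ a^2/4
  have hkey : a ^ 2 / 4 ≤ 1 - f ^ 2 := by
    rw [hasq, hfsq]; nlinarith
  have ha2 : a ≤ 2 := by nlinarith
  -- p bound
  have hf2nn : 0 ≤ 1 - f ^ 2 := by nlinarith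
  have hpb : p ≤ f + (1 - f) ^ 2 := by
    have habs2 : ‖(ε : ℂ) * (1 - z ^ 2) ^ 5‖ = ε * a ^ 5 := by
      rw [hadef, norm_mul, norm_pow, Complex.norm_of_nonneg hε0.le]
    have htri : p ≤ f + ε * a ^ 5 := by
      calc p = ‖φ z + (ε : ℂ) * (1 - z ^ 2) ^ 5‖ := by rw [hpdef, hψ z]
        _ ≤ ‖φ z‖ + ‖(ε : ℂ) * (1 - z ^ 2) ^ 5‖ :=
            norm_add_le (φ z) ((ε : ℂ) * (1 - z ^ 2) ^ 5)
        _ = f + ε * a ^ 5 := by rw [habs2, ← hfdef]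
    have hkey' : a ^ 2 ≤ 4 * (1 - f ^ 2) := by linarith
    have h4 : a ^ 4 ≤ 16 * (1 - f ^ 2) ^ 2 := by
      calc a ^ 4 = a ^ 2 * a ^ 2 := by ring
        _ ≤ (4 * (1 - f ^ 2)) * (4 * (1 - f ^ 2)) :=
            mul_le_mul hkey' hkey' (sq_nonneg a) (by linarith)
        _ = 16 * (1 - f ^ 2) ^ 2 := by ring
    have h4nn : (0:ℝ) ≤ a ^ 4 := pow_nonneg ha0 4
    have h5 : a ^ 5 ≤ 32 * (1 - f ^ 2) ^ 2 := by
      calc a ^ 5 = a * a ^ 4 := by ring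
        _ ≤ 2 * (16 * (1 - f ^ 2) ^ 2) :=
            mul_le_mul ha2 h4 h4nn (by norm_num)
        _ = 32 * (1 - f ^ 2) ^ 2 := by ring
    have hε32 : 32 * ε ≤ 1 / 4 := by norm_num at hε ⊢; linarith
    have : ε * a ^ 5 ≤ (1 / 4) * (1 - f ^ 2) ^ 2 := by
      calc ε * a ^ 5 ≤ ε * (32 * (1 - f ^ 2) ^ 2) := by
            apply mul_le_mul_of_nonneg_left h5 hε0.le
        _ = (32 * ε) * (1 - f ^ 2) ^ 2 := by ring
        _ ≤ (1 / 4) * (1 - f ^ 2) ^ 2 := by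
            apply mul_le_mul_of_nonneg_right hε32 (by positivity)
    have hsq4 : (1 - f ^ 2) ^ 2 ≤ 4 * (1 - f) ^ 2 := by nlinarith
    linarith
  -- scalar conclusions
  have hp1 : p ≤ 1 := by nlinarith
  have hmain : p - r ≤ 11 * (1 - r) ^ 2 := by
    nlinarith [mul_nonneg (sub_nonneg.2 hflb) (sub_nonneg.2 hfub), sq_nonneg (1-r), sq_nonneg (1+r), mul_nonneg (mul_nonneg hr0 hr0) hr0, sq_nonneg (r-f), sq_nonneg (r+f)]
  -- final division step
  rcases eq_or_lt_of_le hp1 with h | h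
  · rw [← h]
    simp
  · have hc : 0 < 1 - p := by linarith
    have hb : 0 < 1 - r := by linarith
    rw [div_le_div_iff₀ (by positivity) hc]
    calc (p - r) * (1 - p) ≤ 11 * (1 - r) ^ 2 * (1 - p) := by
          apply mul_le_mul_of_nonneg_right hmain hc.le
      _ = 11 * (1 - r) * ((1 - r) * (1 - p)) := by ring
end
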